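/- Let n ≥ 2 be an integer and b ∈ ℂ. Suppose the map g_b is parabolic, i.e., there is a periodic point w₀ of some period h₀ ≥ 1 whose multiplier ∏_{j=0}^{h₀-1} (g_b^{∘j}(w₀))^{n-1} is a root of unity. Then b and b^{n-1} are algebraic integers, every periodic point of g_b is an algebraic integer, and the multiplier of every periodic orbit of g_b is an algebraic integer. -/

import Mathlib

open Polynomial in
lemma isIntegral_of_mem_all_valuationSubrings {K : Type*} [Field K] (x : K)
    (hx : ∀ B : ValuationSubring K, x ∈ B) : IsIntegral ℤ x := by
  by_contra hint
  have hx0 : x ≠ 0 := fun e => hint (e ▸ isIntegral_zero)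
  set S : Subring K := (Algebra.adjoin ℤ {x⁻¹}).toSubring with hS
  have hxS : x⁻¹ ∈ S := Algebra.self_mem_adjoin_singleton ℤ x⁻¹
  -- x⁻¹ is not a unit of S, else x would be integral over ℤ
  have hnu : ¬ IsUnit (⟨x⁻¹, hxS⟩ : S) := by
    intro hu
    obtain ⟨y, hy⟩ := isUnit_iff_exists_inv.mp hu
    have h1 : x⁻¹ * (y : K) = 1 := congrArg Subtype.val hy
    have hyx : (y : K) = x := by
      field_simp at h1
      rw [h1]
    have hxmem : x ∈ Algebra.adjoin ℤ ({x⁻¹} : Set K) := by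
      have h2 : (y : K) ∈ S := y.2
      rwa [hyx] at h2
    rw [Algebra.adjoin_singleton_eq_range_aeval] at hxmem
    obtain ⟨p, hp⟩ := hxmem
    set f : ℤ[X] := X * p - 1 with hf
    have hfz : aeval x⁻¹ f = 0 := by
      have hp' : aeval x⁻¹ p = x := hp
      simp only [hf, map_sub, map_mul, map_one, aeval_X, hp']
      rw [inv_mul_cancel₀ hx0, sub_self]
    have hc0 : f.coeff 0 = -1 := by
      simp [hf, mul_coeff_zero]
    have hinv : Invertible x⁻¹ := ⟨x, by field_simp, by field_simp⟩
    have hrev : aeval x f.reverse = 0 := by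
      have := (Polynomial.eval₂_reverse_eq_zero_iff (algebraMap ℤ K) x⁻¹ f).mpr
        (by rw [← aeval_def]; exact hfz)
      have hix : (⅟ (x⁻¹) : K) = x := invOf_eq_right_inv (inv_mul_cancel₀ hx0)
      rw [aeval_def, ← hix]
      exact this
    have hntd : f.natTrailingDegree = 0 := by
      rw [Polynomial.natTrailingDegree_eq_zero]
      right
      rw [hc0]; exact neg_ne_zero.mpr one_ne_zero
    have hmon : (-f.reverse).Monic := by
      have : f.reverse.leadingCoeff = -1 := by
        rw [Polynomial.reverse_leadingCoeff, Polynomial.trailingCoeff, hntd, hc0]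
      rw [Polynomial.Monic, Polynomial.leadingCoeff_neg, this, neg_neg]
    exact hint ⟨-f.reverse, hmon, by rw [eval₂_neg, ← aeval_def, hrev, neg_zero]⟩
  -- find a maximal ideal of S containing x⁻¹
  have hspan : Ideal.span {(⟨x⁻¹, hxS⟩ : S)} ≠ ⊤ := by
    rw [Ne, Ideal.span_singleton_eq_top]; exact hnu
  obtain ⟨m, hmax, hmle⟩ := Ideal.exists_le_maximal _ hspan
  have hxm : (⟨x⁻¹, hxS⟩ : S) ∈ m := hmle (Ideal.subset_span rfl)
  haveI := hmax.isPrime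
  obtain ⟨B, hBle, hBloc⟩ := (LocalSubring.ofPrime S m).exists_le_valuationSubring
  have hxB : x ∈ B := hx B
  have hxiB : x⁻¹ ∈ (LocalSubring.ofPrime S m).toSubring := LocalSubring.le_ofPrime S m hxS
  have hunitB : IsUnit (Subring.inclusion hBle ⟨x⁻¹, hxiB⟩) :=
    isUnit_iff_exists_inv.mpr ⟨⟨x, hxB⟩, Subtype.ext (inv_mul_cancel₀ hx0)⟩
  have hunit : IsUnit (⟨x⁻¹, hxiB⟩ : (LocalSubring.ofPrime S m).toSubring) :=
    hBloc.1 _ hunitB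
  have := (IsLocalization.AtPrime.isUnit_to_map_iff
    (LocalSubring.ofPrime S m).toSubring m (⟨x⁻¹, hxS⟩ : S)).mp hunit
  exact this hxm

section Val
variable {Γ : Type*} [LinearOrderedCommGroupWithZero Γ] (v : Valuation ℂ Γ)

lemma step_lemma {n : ℕ} (hn : 2 ≤ n) {b u : ℂ} (hν : v n ≤ 1) (hν0 : v n ≠ 0)
    (h1 : 1 < v u) (h2 : v b < (v u) ^ n) :
    v u < v ((u ^ n + b) / n) ∧ 1 < v ((u ^ n + b) / n) ∧
      v b < (v ((u ^ n + b) / n)) ^ n := by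
  have hνpos : (0 : Γ) < v n := lt_of_le_of_ne zero_le' (Ne.symm hν0)
  have e1 : v (u ^ n + b) = (v u) ^ n := by
    rw [Valuation.map_add_eq_of_lt_left]
    · exact v.map_pow u n
    · rw [v.map_pow]; exact h2
  have e2 : v ((u ^ n + b) / n) = (v u) ^ n / v n := by
    rw [Valuation.map_div, e1]
  have hge : (v u) ^ n ≤ v ((u ^ n + b) / n) := by
    rw [e2, le_div_iff₀ hνpos]
    exact mul_le_of_le_one_right' hν
  have h12 : v u < (v u) ^ n := by
    calc v u < (v u) ^ 2 := by simpa using pow_lt_pow_right₀ h1 one_lt_two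
    _ ≤ (v u) ^ n := pow_le_pow_right₀ h1.le hn
  have hA : v u < v ((u ^ n + b) / n) := h12.trans_le hge
  have hB : 1 < v ((u ^ n + b) / n) := h1.trans hA
  refine ⟨hA, hB, ?_⟩
  calc v b < (v u) ^ n := h2
  _ ≤ v ((u ^ n + b) / n) := hge
  _ = (v ((u ^ n + b) / n)) ^ 1 := (pow_one _).symm
  _ ≤ (v ((u ^ n + b) / n)) ^ n := pow_le_pow_right₀ hB.le (by omega)

lemma no_escape {n : ℕ} (hn : 2 ≤ n) {b : ℂ} {g : ℂ → ℂ}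
    (hg : g = fun z : ℂ => (z ^ n + b) / n) (hν : v n ≤ 1) (hν0 : v n ≠ 0)
    {u : ℂ} {h : ℕ} (hh : 1 ≤ h) (hper : g^[h] u = u) :
    ¬ (1 < v u ∧ v b < (v u) ^ n) := by
  rintro ⟨h1, h2⟩
  have inv : ∀ k, 1 < v (g^[k] u) ∧ v b < (v (g^[k] u)) ^ n := by
    intro k
    induction k with
    | zero => exact ⟨h1, h2⟩
    | succ k ih =>
      have e : g^[k+1] u = (g^[k] u ^ n + b) / n := by
        rw [Function.iterate_succ_apply', hg]
      rw [e]
      exact ⟨(step_lemma v hn hν hν0 ih.1 ih.2).2.1, (step_lemma v hn hν hν0 ih.1 ih.2).2.2⟩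
  have hsm : StrictMono (fun k => v (g^[k] u)) := by
    apply strictMono_nat_of_lt_succ
    intro k
    have e : g^[k+1] u = (g^[k] u ^ n + b) / n := by
      rw [Function.iterate_succ_apply', hg]
    show v (g^[k] u) < v (g^[k+1] u)
    rw [e]
    exact (step_lemma v hn hν hν0 (inv k).1 (inv k).2).1
  have h0h : v (g^[0] u) < v (g^[h] u) := hsm (show 0 < h by omega)
  rw [hper, Function.iterate_zero_apply] at h0h
  exact lt_irrefl _ h0h

end Val

section Val2
variable {Γ : Type*} [LinearOrderedCommGroupWithZero Γ] (v : Valuation ℂ Γ)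

lemma vb_le_one {n : ℕ} (hn : 2 ≤ n) {b : ℂ} {g : ℂ → ℂ}
    (hg : g = fun z : ℂ => (z ^ n + b) / n) (hν : v n ≤ 1) (hν0 : v n ≠ 0)
    {w₀ : ℂ} {h₀ : ℕ} (hh : 1 ≤ h₀) (hper : g^[h₀] w₀ = w₀)
    {m : ℕ} (hm : 1 ≤ m)
    (hmul : (∏ j ∈ Finset.range h₀, (g^[j] w₀) ^ (n - 1)) ^ m = 1) :
    v b ≤ 1 := by
  have hνpos : (0 : Γ) < v n := lt_of_le_of_ne zero_le' (Ne.symm hν0)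
  by_contra hβ
  push_neg at hβ
  have hper' : ∀ j, g^[h₀] (g^[j] w₀) = g^[j] w₀ := by
    intro j
    rw [← Function.iterate_add_apply, Nat.add_comm, Function.iterate_add_apply, hper]
  have hkey : ∀ j, (v (g^[j] w₀)) ^ n = v b := by
    intro j
    rcases lt_trichotomy ((v (g^[j] w₀)) ^ n) (v b) with hlt | heq | hgt
    · exfalso
      have e : g^[j+1] w₀ = (g^[j] w₀ ^ n + b) / n := by
        rw [Function.iterate_succ_apply', hg]
      have e1 : v (g^[j+1] w₀) = v b / v n := by
        rw [e, Valuation.map_div, Valuation.map_add_eq_of_lt_right]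
        rw [v.map_pow]; exact hlt
      have hβ' : v b ≤ v (g^[j+1] w₀) := by
        rw [e1, le_div_iff₀ hνpos]
        exact mul_le_of_le_one_right' hν
      have h1' : 1 < v (g^[j+1] w₀) := lt_of_lt_of_le hβ hβ'
      have h2' : v b < (v (g^[j+1] w₀)) ^ n := by
        calc v b ≤ v (g^[j+1] w₀) := hβ'
        _ < (v (g^[j+1] w₀)) ^ 2 := by simpa using pow_lt_pow_right₀ h1' one_lt_two
        _ ≤ _ := pow_le_pow_right₀ h1'.le hn
      exact no_escape v hn hg hν hν0 hh (hper' (j+1)) ⟨h1', h2'⟩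
    · exact heq
    · exfalso
      have h1' : 1 < v (g^[j] w₀) := by
        by_contra hle
        push_neg at hle
        have hone : (v (g^[j] w₀)) ^ n ≤ 1 := pow_le_one₀ zero_le' hle
        exact absurd (hβ.trans hgt) (not_lt.mpr hone)
      exact no_escape v hn hg hν hν0 hh (hper' j) ⟨h1', hgt⟩
  have hvμ : (∏ j ∈ Finset.range h₀, v (g^[j] w₀)) = 1 := by
    have h1 : (v (∏ j ∈ Finset.range h₀, (g^[j] w₀) ^ (n - 1))) ^ m = 1 := by
      rw [← v.map_pow, hmul, v.map_one]
    have h2 : v (∏ j ∈ Finset.range h₀, (g^[j] w₀) ^ (n - 1)) = 1 :=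
      (pow_eq_one_iff_left (by omega : m ≠ 0)).1 h1
    have h3 : (∏ j ∈ Finset.range h₀, v (g^[j] w₀)) ^ (n - 1) = 1 := by
      rw [← Finset.prod_pow]
      rw [← h2, map_prod]
      exact Finset.prod_congr rfl fun j _ => (v.map_pow _ _).symm
    exact (pow_eq_one_iff_left (by omega : n - 1 ≠ 0)).1 h3
  have hb1 : (v b) ^ h₀ = 1 := by
    have e : ∏ j ∈ Finset.range h₀, (v (g^[j] w₀)) ^ n = (v b) ^ h₀ := by
      rw [Finset.prod_congr rfl fun j _ => hkey j, Finset.prod_const, Finset.card_range]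
    rw [← e, Finset.prod_pow, hvμ, one_pow]
  exact absurd ((pow_eq_one_iff_left (by omega : h₀ ≠ 0)).1 hb1) (ne_of_gt hβ)

lemma periodic_le_one {n : ℕ} (hn : 2 ≤ n) {b : ℂ} {g : ℂ → ℂ}
    (hg : g = fun z : ℂ => (z ^ n + b) / n) (hν : v n ≤ 1) (hν0 : v n ≠ 0)
    (hb : v b ≤ 1) {w : ℂ} {h : ℕ} (hh : 1 ≤ h) (hper : g^[h] w = w) :
    v w ≤ 1 := by
  by_contra h1
  push_neg at h1
  have h2 : v b < (v w) ^ n := by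
    calc v b ≤ 1 := hb
    _ < v w := h1
    _ < (v w) ^ 2 := by simpa using pow_lt_pow_right₀ h1 one_lt_two
    _ ≤ (v w) ^ n := pow_le_pow_right₀ h1.le hn
  exact no_escape v hn hg hν hν0 hh hper ⟨h1, h2⟩

end Val2

theorem stmt3 (n : ℕ) (hn : 2 ≤ n) (b : ℂ) (g : ℂ → ℂ)
    (hg : g = fun z : ℂ => (z ^ n + b) / n)
    (hpar : ∃ (w₀ : ℂ) (h₀ : ℕ), 1 ≤ h₀ ∧ g^[h₀] w₀ = w₀ ∧
      ∃ m : ℕ, 1 ≤ m ∧ (∏ j ∈ Finset.range h₀, (g^[j] w₀) ^ (n - 1)) ^ m = 1) :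
    IsIntegral ℤ b ∧ IsIntegral ℤ (b ^ (n - 1)) ∧
      ∀ (w : ℂ) (h : ℕ), 1 ≤ h → g^[h] w = w →
        IsIntegral ℤ w ∧
          IsIntegral ℤ (∏ j ∈ Finset.range h, (g^[j] w) ^ (n - 1)) := by
  obtain ⟨w₀, h₀, hh₀, hperi, m, hm, hmul⟩ := hpar
  have hn0 : ((n : ℂ)) ≠ 0 := Nat.cast_ne_zero.mpr (by omega)
  -- for each valuation subring, its valuation of n is ≤ 1 and ≠ 0
  have hνle : ∀ B : ValuationSubring ℂ, B.valuation (n : ℂ) ≤ 1 := by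
    intro B
    exact (B.valuation_le_one_iff _).2 (natCast_mem B.toSubring n)
  have hν0 : ∀ B : ValuationSubring ℂ, B.valuation (n : ℂ) ≠ 0 := by
    intro B
    exact (Valuation.ne_zero_iff _).2 hn0
  -- b has valuation ≤ 1 everywhere
  have hbB : ∀ B : ValuationSubring ℂ, B.valuation b ≤ 1 := fun B =>
    vb_le_one B.valuation hn hg (hνle B) (hν0 B) hh₀ hperi hm hmul
  have hbint : IsIntegral ℤ b :=
    isIntegral_of_mem_all_valuationSubrings b
      (fun B => (B.valuation_le_one_iff _).1 (hbB B))
  -- every periodic point is integral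
  have hwint : ∀ (w : ℂ) (h : ℕ), 1 ≤ h → g^[h] w = w → IsIntegral ℤ w := by
    intro w h hh hper
    exact isIntegral_of_mem_all_valuationSubrings w
      (fun B => (B.valuation_le_one_iff _).1
        (periodic_le_one B.valuation hn hg (hνle B) (hν0 B) (hbB B) hh hper))
  refine ⟨hbint, hbint.pow _, ?_⟩
  intro w h hh hper
  have hper' : ∀ j, g^[h] (g^[j] w) = g^[j] w := by
    intro j
    rw [← Function.iterate_add_apply, Nat.add_comm, Function.iterate_add_apply, hper]
  refine ⟨hwint w h hh hper, ?_⟩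
  have hmem : (∏ j ∈ Finset.range h, (g^[j] w) ^ (n - 1)) ∈ integralClosure ℤ ℂ :=
    Subalgebra.prod_mem _ fun j _ =>
      Subalgebra.pow_mem _ (hwint (g^[j] w) h hh (hper' j)) _
  exact hmem
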